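/- arXiv:2109.05306 — 8 statements merged into one kernel-verified Lean document; each statement's English description precedes it below -/
import Mathlib

section
/- Let L be a real symmetric n×n matrix and M = (e_a - e_b)(e_a - e_b)^T with a ≠ b. If L and M commute, then for every real t and real α, exp(-it(L + αM)) = exp(-itL)·[I + (1/2)(exp(-2iαt) - 1)M]. -/
open Matrix Complex

set_option maxHeartbeats 1000000 in
private lemma exp_smul_idem {m : ℕ} (P : Matrix (Fin m) (Fin m) ℂ)
    (hP : P * P = P) (x : ℂ) :
    NormedSpace.exp (x • P) = 1 + (Complex.exp x - 1) • P := by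
  have hpow : ∀ k : ℕ, (x • P) ^ (k + 1) = x ^ (k + 1) • P := by
    intro k
    induction k with
    | zero => simp
    | succ k ih =>
      rw [pow_succ, ih, smul_mul_assoc, mul_smul_comm, hP, smul_smul, ← pow_succ]
  have hsum : Summable fun k : ℕ => ((Nat.factorial k : ℂ))⁻¹ • (x • P) ^ k := by
    letI : SeminormedRing (Matrix (Fin m) (Fin m) ℂ) := Matrix.linftyOpSemiNormedRing
    letI : NormedRing (Matrix (Fin m) (Fin m) ℂ) := Matrix.linftyOpNormedRing
    letI : NormedAlgebra ℂ (Matrix (Fin m) (Fin m) ℂ) := Matrix.linftyOpNormedAlgebra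
    exact NormedSpace.expSeries_summable' (𝕂 := ℂ) (x • P)
  have hsumC : Summable fun k : ℕ => ((Nat.factorial k : ℂ))⁻¹ • x ^ k :=
    NormedSpace.expSeries_summable' (𝕂 := ℂ) x
  have hexpx : Complex.exp x
      = 1 + ∑' k : ℕ, ((Nat.factorial (k + 1) : ℂ))⁻¹ • x ^ (k + 1) := by
    rw [Complex.exp_eq_exp_ℂ]
    simp only [NormedSpace.exp_eq_tsum ℂ]
    rw [Summable.tsum_eq_zero_add hsumC]
    simp
  simp only [NormedSpace.exp_eq_tsum ℂ]
  rw [Summable.tsum_eq_zero_add hsum]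
  have hterm : ∀ k : ℕ, ((Nat.factorial (k + 1) : ℂ))⁻¹ • (x • P) ^ (k + 1)
      = (((Nat.factorial (k + 1) : ℂ))⁻¹ • x ^ (k + 1)) • P := by
    intro k; rw [hpow, smul_smul, smul_eq_mul]
  simp only [hterm]
  have hsC : Summable fun k : ℕ => ((Nat.factorial (k + 1) : ℂ))⁻¹ • x ^ (k + 1) :=
    (summable_nat_add_iff 1).mpr hsumC
  have h2 : (∑' k : ℕ, ((Nat.factorial (k + 1) : ℂ))⁻¹ • x ^ (k + 1))
      = Complex.exp x - 1 := by
    rw [hexpx]; ring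
  have hs : HasSum (fun k : ℕ => (((Nat.factorial (k + 1) : ℂ))⁻¹ • x ^ (k + 1)) • P)
      ((Complex.exp x - 1) • P) := (h2 ▸ hsC.hasSum).smul_const P
  rw [hs.tsum_eq]
  simp

/-- If a real symmetric matrix `L` commutes with `M = (e_a - e_b)(e_a - e_b)ᵀ`
(`a ≠ b`), then for all real `t, α`,
`exp(-it(L+αM)) = exp(-itL) · (I + (1/2)(exp(-2iαt)-1) M)`. -/
theorem exp_perturbed_laplacian {n : ℕ} (L : Matrix (Fin n) (Fin n) ℝ)
    (hL : L.IsSymm) (a b : Fin n) (hab : a ≠ b) (t α : ℝ)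
    (hcomm :
      L * vecMulVec (Pi.single a 1 - Pi.single b 1) (Pi.single a 1 - Pi.single b 1) =
      vecMulVec (Pi.single a 1 - Pi.single b 1) (Pi.single a 1 - Pi.single b 1) * L) :
    let M : Matrix (Fin n) (Fin n) ℂ :=
      vecMulVec (Pi.single a 1 - Pi.single b 1) (Pi.single a 1 - Pi.single b 1)
    NormedSpace.exp ((-(I * t)) • (L.map Complex.ofReal + (α : ℂ) • M)) =
      NormedSpace.exp ((-(I * t)) • L.map Complex.ofReal) *
        (1 + ((Complex.exp (-(2 * I * α * t)) - 1) / 2) • M) := by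
  intro M
  set Lc : Matrix (Fin n) (Fin n) ℂ := L.map Complex.ofReal with hLc
  set w : Fin n → ℂ := Pi.single a 1 - Pi.single b 1 with hw
  -- M is the complexification of the real vecMulVec
  have hMmap : (vecMulVec (Pi.single a 1 - Pi.single b 1)
      (Pi.single a 1 - Pi.single b 1) : Matrix (Fin n) (Fin n) ℝ).map Complex.ofReal = M := by
    ext i j
    simp only [Matrix.map_apply, vecMulVec_apply, M, hw, Pi.sub_apply, Pi.single_apply]
    split_ifs <;> push_cast <;> ring
  -- commutation over ℂ
  have hmapmul : ∀ A B : Matrix (Fin n) (Fin n) ℝ,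
      (A * B).map Complex.ofReal = A.map Complex.ofReal * B.map Complex.ofReal := by
    intro A B
    ext i j
    simp only [Matrix.map_apply, mul_apply]
    push_cast
    rfl
  have hcommC : Lc * M = M * Lc := by
    rw [← hMmap, hLc, ← hmapmul, ← hmapmul, hcomm]
  -- M * M = 2 • M
  have hdot : w ⬝ᵥ w = 2 := by
    simp [hw, sub_dotProduct, dotProduct_sub, dotProduct_single, single_dotProduct,
      Pi.single_apply, hab, hab.symm]
    ring
  have hMM : M * M = (2 : ℂ) • M := by
    have h : M * M = (w ⬝ᵥ w) • M := by
      ext i j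
      simp only [mul_apply, M, ← hw, vecMulVec_apply, Matrix.smul_apply, dotProduct, smul_eq_mul]
      rw [Finset.sum_mul]
      apply Finset.sum_congr rfl
      intros; ring
    rw [h, hdot]
  set P : Matrix (Fin n) (Fin n) ℂ := (2 : ℂ)⁻¹ • M with hPdef
  have hP : P * P = P := by
    rw [hPdef, smul_mul_assoc, mul_smul_comm, hMM, smul_smul, smul_smul]
    norm_num
  have hsplit : (-(I * t)) • (Lc + (α : ℂ) • M) =
      (-(I * t)) • Lc + (-(2 * I * α * t)) • P := by
    rw [smul_add, hPdef, smul_smul, smul_smul]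
    congr 1
    congr 1
    ring
  have hcommute : Commute ((-(I * t)) • Lc) ((-(2 * I * α * t)) • P) := by
    refine (Commute.smul_left ?_ _).smul_right _
    rw [hPdef]
    exact (Commute.smul_right hcommC _)
  rw [hsplit, Matrix.exp_add_of_commute _ _ hcommute, exp_smul_idem P hP]
  have hfin : (Complex.exp (-(2 * I * α * t)) - 1) • P
      = ((Complex.exp (-(2 * I * α * t)) - 1) / 2) • M := by
    rw [hPdef, smul_smul, div_eq_mul_inv]
  rw [hfin]
end

section
/- Let L be a real symmetric matrix commuting with M = (e_a - e_b)(e_a - e_b)^T (a ≠ b), let α, τ ∈ R with ατ ∈ πZ, and set U(t) = exp(-itL), U^α(t) = exp(-it(L+αM)). Then U^α(τ) = U(τ). In particular, if e_b^T U(τ) e_a = γ for some unimodular γ (perfect state transfer between a and b at time τ in the unperturbed system), the same holds in the perturbed system. -/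
set_option maxHeartbeats 1000000


open Matrix Complex Nat

/-- Exponential of a scalar multiple of an idempotent matrix. -/
lemma exp_smul_idem_aux {m : Type*} [Fintype m] [DecidableEq m]
    (p : Matrix m m ℂ) (hp : p * p = p) (c : ℂ) :
    NormedSpace.exp (c • p) = 1 + (Complex.exp c - 1) • p := by
  letI : SeminormedRing (Matrix m m ℂ) := Matrix.linftyOpSemiNormedRing
  letI : NormedRing (Matrix m m ℂ) := Matrix.linftyOpNormedRing
  letI : NormedAlgebra ℂ (Matrix m m ℂ) := Matrix.linftyOpNormedAlgebra
  have hpow : ∀ k : ℕ, p ^ (k + 1) = p := by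
    intro k
    induction k with
    | zero => simp
    | succ k ih => rw [pow_succ, ih, hp]
  have hsum : Summable fun n : ℕ => (n !⁻¹ : ℂ) • (c • p) ^ n :=
    NormedSpace.expSeries_summable' (c • p)
  have hsumc : Summable fun n : ℕ => (n !⁻¹ : ℂ) * c ^ n := by
    simpa [smul_eq_mul] using NormedSpace.expSeries_summable' (𝕂 := ℂ) c
  have hsumc' : Summable fun k : ℕ => ((k + 1)!⁻¹ : ℂ) * c ^ (k + 1) :=
    (summable_nat_add_iff (f := fun n : ℕ => ((n ! : ℂ))⁻¹ * c ^ n) 1).2 hsumc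
  have hc : Complex.exp c = 1 + ∑' k : ℕ, ((k + 1)!⁻¹ : ℂ) * c ^ (k + 1) := by
    have h0 : Complex.exp c = ∑' n : ℕ, ((n ! : ℂ))⁻¹ * c ^ n := by
      rw [Complex.exp_eq_exp_ℂ, NormedSpace.exp_eq_tsum ℂ]
      simp [smul_eq_mul]
    rw [h0, Summable.tsum_eq_zero_add hsumc]
    norm_num
  rw [NormedSpace.exp_eq_tsum ℂ]
  show (∑' n : ℕ, (n !⁻¹ : ℂ) • (c • p) ^ n) = _
  rw [Summable.tsum_eq_zero_add hsum]
  have hterm : ∀ k : ℕ, ((k + 1)!⁻¹ : ℂ) • (c • p) ^ (k + 1)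
      = (((k + 1)!⁻¹ : ℂ) * c ^ (k + 1)) • p := by
    intro k
    rw [smul_pow, hpow, smul_smul]
  calc (0!⁻¹ : ℂ) • (c • p) ^ 0 + ∑' k : ℕ, ((k + 1)!⁻¹ : ℂ) • (c • p) ^ (k + 1)
      = 1 + ∑' k : ℕ, (((k + 1)!⁻¹ : ℂ) * c ^ (k + 1)) • p := by
        simp only [hterm, pow_zero, Nat.factorial_zero, Nat.cast_one, inv_one, one_smul]
    _ = 1 + (∑' k : ℕ, ((k + 1)!⁻¹ : ℂ) * c ^ (k + 1)) • p := by
        rw [Summable.tsum_smul_const hsumc']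
    _ = 1 + (Complex.exp c - 1) • p := by rw [hc, add_sub_cancel_left]

/-- If `L` is real symmetric and commutes with `M = (e_a - e_b)(e_a - e_b)ᵀ`
(`a ≠ b`), and `ατ ∈ πℤ`, then the perturbed transition matrix at time `τ`
equals the unperturbed one; in particular perfect state transfer between
`a` and `b` at time `τ` is preserved. -/
theorem perturbed_transition_eq_of_alpha_tau_int {n : ℕ}
    (L : Matrix (Fin n) (Fin n) ℝ) (hL : L.IsSymm) (a b : Fin n) (hab : a ≠ b)
    (α τ : ℝ) (hτ : ∃ k : ℤ, α * τ = k * Real.pi)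
    (hcomm :
      L * vecMulVec (Pi.single a 1 - Pi.single b 1) (Pi.single a 1 - Pi.single b 1) =
      vecMulVec (Pi.single a 1 - Pi.single b 1) (Pi.single a 1 - Pi.single b 1) * L) :
    let M : Matrix (Fin n) (Fin n) ℂ :=
      vecMulVec (Pi.single a 1 - Pi.single b 1) (Pi.single a 1 - Pi.single b 1)
    NormedSpace.exp ((-(I * τ)) • (L.map Complex.ofReal + (α : ℂ) • M)) =
      NormedSpace.exp ((-(I * τ)) • L.map Complex.ofReal) ∧
    ∀ γ : ℂ, ‖γ‖ = 1 →
      NormedSpace.exp ((-(I * τ)) • L.map Complex.ofReal) *ᵥ Pi.single a 1 =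
        γ • (Pi.single b 1 : Fin n → ℂ) →
      NormedSpace.exp ((-(I * τ)) • (L.map Complex.ofReal + (α : ℂ) • M)) *ᵥ
        Pi.single a 1 = γ • (Pi.single b 1 : Fin n → ℂ) := by
  intro M
  obtain ⟨k, hk⟩ := hτ
  set v : Fin n → ℂ := Pi.single a 1 - Pi.single b 1 with hv
  -- M over ℂ is the map of the real M
  have hMmap : (vecMulVec (Pi.single a 1 - Pi.single b 1)
      (Pi.single a 1 - Pi.single b 1) : Matrix (Fin n) (Fin n) ℝ).map Complex.ofReal = M := by
    ext i j
    simp [Matrix.map_apply, vecMulVec_apply, M, hv, Pi.single_apply, apply_ite (Complex.ofReal)]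
  -- complex commutation
  have hcommC : L.map Complex.ofReal * M = M * L.map Complex.ofReal := by
    have h := congrArg (fun X : Matrix (Fin n) (Fin n) ℝ =>
      X.map (Complex.ofRealHom : ℝ →+* ℂ)) hcomm
    simp only [Matrix.map_mul] at h
    rw [← hMmap]
    exact h
  -- M * M = 2 • M
  have hvv : ∑ i, v i * v i = 2 := by
    have : ∀ i, v i * v i = ((Pi.single a 1 : Fin n → ℂ) i) + ((Pi.single b 1 : Fin n → ℂ) i) := by
      intro i
      simp only [hv, Pi.sub_apply, Pi.single_apply]
      rcases eq_or_ne i a with rfl | hia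
      · norm_num [hab]
      · rcases eq_or_ne i b with rfl | hib
        · norm_num [hia]
        · norm_num [hia, hib]
    rw [Finset.sum_congr rfl fun i _ => this i]
    rw [Finset.sum_add_distrib]
    norm_num
  have hMM : M * M = (2 : ℂ) • M := by
    ext i j
    simp only [Matrix.mul_apply, vecMulVec_apply, Matrix.smul_apply, M, ← hv, smul_eq_mul]
    calc ∑ x, v i * v x * (v x * v j) = (∑ x, v x * v x) * (v i * v j) := by
          rw [Finset.sum_mul]; congr 1; ext x; ring
      _ = 2 * (v i * v j) := by rw [hvv]
  -- p = (1/2) M is idempotent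
  set p : Matrix (Fin n) (Fin n) ℂ := (2 : ℂ)⁻¹ • M with hpdef
  have hp : p * p = p := by
    rw [hpdef, smul_mul_assoc, mul_smul_comm, hMM, smul_smul, smul_smul]
    norm_num
  have hMp : M = (2 : ℂ) • p := by
    rw [hpdef, smul_smul]; norm_num
  -- exp of the perturbation part is 1
  have hexpM : NormedSpace.exp ((-(I * τ) * α) • M) = 1 := by
    have h1 : (-(I * τ) * α) • M = (2 * (-(I * τ) * α)) • p := by
      rw [hMp, smul_smul]; ring_nf
    rw [h1, exp_smul_idem_aux p hp]
    have h2 : (2 * (-(I * (τ : ℂ)) * (α : ℂ))) = ((-k : ℤ) : ℂ) * (2 * Real.pi * I) := by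
      have hk' : ((α : ℂ) * (τ : ℂ)) = (k : ℂ) * (Real.pi : ℂ) := by
        exact_mod_cast congrArg Complex.ofReal hk
      push_cast
      linear_combination (-2 * I) * hk'
    rw [h2, Complex.exp_int_mul_two_pi_mul_I]
    simp
  -- split the exponential
  have hsplit : ((-(I * τ)) • (L.map Complex.ofReal + (α : ℂ) • M)) =
      (-(I * τ)) • L.map Complex.ofReal + (-(I * τ) * α) • M := by
    rw [smul_add, smul_smul]
  have hcomm2 : Commute ((-(I * τ)) • L.map Complex.ofReal) ((-(I * τ) * α) • M) :=
    (Commute.smul_left (Commute.smul_right hcommC _) _)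
  have hmain : NormedSpace.exp ((-(I * τ)) • (L.map Complex.ofReal + (α : ℂ) • M)) =
      NormedSpace.exp ((-(I * τ)) • L.map Complex.ofReal) := by
    rw [hsplit, Matrix.exp_add_of_commute _ _ hcomm2, hexpM, mul_one]
  refine ⟨hmain, fun γ _ h => ?_⟩
  rw [hmain]
  exact h
end

section
/- Let L be a real symmetric matrix commuting with M = (e_a - e_b)(e_a - e_b)^T (a ≠ b), and let q ∉ {a, b}. Then for all real t and α, exp(-it(L+αM)) e_q = exp(-itL) e_q. Hence any perfect state transfer of exp(-itL) between two vertices p, q both outside {a,b} is preserved under the perturbation L ↦ L + αM. -/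
open Matrix Complex

lemma exp_mulVec_of_ker {n : ℕ} (S : Matrix (Fin n) (Fin n) ℂ) (v : Fin n → ℂ)
    (hv : S *ᵥ v = 0) : NormedSpace.exp S *ᵥ v = v := by
  letI : SeminormedRing (Matrix (Fin n) (Fin n) ℂ) := Matrix.linftyOpSemiNormedRing
  letI : NormedRing (Matrix (Fin n) (Fin n) ℂ) := Matrix.linftyOpNormedRing
  letI : NormedAlgebra ℂ (Matrix (Fin n) (Fin n) ℂ) := Matrix.linftyOpNormedAlgebra
  let φ₀ : Matrix (Fin n) (Fin n) ℂ →ₗ[ℂ] (Fin n → ℂ) :=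
    { toFun := fun A => A *ᵥ v
      map_add' := fun A B => Matrix.add_mulVec A B v
      map_smul' := fun c A => (smul_mulVec c A v) }
  let φ : Matrix (Fin n) (Fin n) ℂ →L[ℂ] (Fin n → ℂ) := φ₀.toContinuousLinearMap
  have hpow : ∀ k : ℕ, k ≠ 0 → S ^ k *ᵥ v = 0 := by
    intro k hk
    obtain ⟨m, rfl⟩ := Nat.exists_eq_succ_of_ne_zero hk
    induction m with
    | zero => simpa using hv
    | succ m ih =>
      rw [pow_succ, ← Matrix.mulVec_mulVec, hv, Matrix.mulVec_zero]
  have key : φ (NormedSpace.exp S) = v := by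
    rw [NormedSpace.exp_eq_tsum ℂ, φ.map_tsum (NormedSpace.expSeries_summable' (𝕂 := ℂ) S)]
    rw [tsum_eq_single 0]
    · simp [φ, φ₀]
    · intro k hk
      have : φ ((Nat.factorial k : ℂ)⁻¹ • S ^ k) = (Nat.factorial k : ℂ)⁻¹ • (S ^ k *ᵥ v) := by
        simp [φ, φ₀, smul_mulVec]
      rw [this, hpow k hk, smul_zero]
  exact key

/-- If `L` is real symmetric and commutes with `M = (e_a - e_b)(e_a - e_b)ᵀ`
(`a ≠ b`) and `q ∉ {a,b}`, then `exp(-it(L+αM)) e_q = exp(-itL) e_q` for all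
`t, α`; hence perfect state transfer between two vertices `p, q` outside
`{a,b}` is preserved under the perturbation. -/
theorem perturbed_transition_outside_vertices {n : ℕ}
    (L : Matrix (Fin n) (Fin n) ℝ) (hL : L.IsSymm) (a b : Fin n) (hab : a ≠ b)
    (hcomm :
      L * vecMulVec (Pi.single a 1 - Pi.single b 1) (Pi.single a 1 - Pi.single b 1) =
      vecMulVec (Pi.single a 1 - Pi.single b 1) (Pi.single a 1 - Pi.single b 1) * L) :
    let M : Matrix (Fin n) (Fin n) ℂ :=
      vecMulVec (Pi.single a 1 - Pi.single b 1) (Pi.single a 1 - Pi.single b 1)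
    (∀ (t α : ℝ) (q : Fin n), q ≠ a → q ≠ b →
      NormedSpace.exp ((-(I * t)) • (L.map Complex.ofReal + (α : ℂ) • M)) *ᵥ
          Pi.single q 1 =
        NormedSpace.exp ((-(I * t)) • L.map Complex.ofReal) *ᵥ Pi.single q 1) ∧
    ∀ (τ α : ℝ) (p q : Fin n), p ≠ a → p ≠ b → q ≠ a → q ≠ b →
      ∀ γ : ℂ, ‖γ‖ = 1 →
        NormedSpace.exp ((-(I * τ)) • L.map Complex.ofReal) *ᵥ Pi.single q 1 =
          γ • (Pi.single p 1 : Fin n → ℂ) →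
        NormedSpace.exp ((-(I * τ)) • (L.map Complex.ofReal + (α : ℂ) • M)) *ᵥ
          Pi.single q 1 = γ • (Pi.single p 1 : Fin n → ℂ) := by
  intro M
  have hMmap : (vecMulVec (Pi.single a 1 - Pi.single b 1)
      (Pi.single a 1 - Pi.single b 1) : Matrix (Fin n) (Fin n) ℝ).map Complex.ofReal = M := by
    ext i j
    simp only [Matrix.map_apply, vecMulVec_apply, Pi.sub_apply, Pi.single_apply, M]
    split_ifs <;> norm_num
  have hcommC : L.map Complex.ofReal * M = M * L.map Complex.ofReal := by
    have h1 : ∀ A B : Matrix (Fin n) (Fin n) ℝ,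
        (A * B).map Complex.ofReal = A.map Complex.ofReal * B.map Complex.ofReal := by
      intro A B
      exact Matrix.map_mul (f := Complex.ofRealHom)
    rw [← hMmap, ← h1, ← h1, hcomm]
  have hMq : ∀ q : Fin n, q ≠ a → q ≠ b → M *ᵥ (Pi.single q 1 : Fin n → ℂ) = 0 := by
    intro q hqa hqb
    ext i
    simp [M, mulVec, dotProduct, vecMulVec_apply, Pi.single_apply, hqa, hqb,
      Ne.symm hqa, Ne.symm hqb]
  have main : ∀ (t α : ℝ) (q : Fin n), q ≠ a → q ≠ b →
      NormedSpace.exp ((-(I * t)) • (L.map Complex.ofReal + (α : ℂ) • M)) *ᵥ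
          Pi.single q 1 =
        NormedSpace.exp ((-(I * t)) • L.map Complex.ofReal) *ᵥ Pi.single q 1 := by
    intro t α q hqa hqb
    have hsplit : (-(I * t)) • (L.map Complex.ofReal + (α : ℂ) • M) =
        (-(I * t)) • L.map Complex.ofReal + ((-(I * t)) * α) • M := by
      rw [smul_add, smul_smul]
    have hc : Commute ((-(I * t)) • L.map Complex.ofReal) (((-(I * t)) * α) • M) :=
      (Commute.smul_left (Commute.smul_right hcommC _) _)
    have hker : ((-(I * t) * (α : ℂ)) • M) *ᵥ (Pi.single q 1 : Fin n → ℂ) = 0 := by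
      rw [smul_mulVec, hMq q hqa hqb, smul_zero]
    rw [hsplit, Matrix.exp_add_of_commute _ _ hc, ← Matrix.mulVec_mulVec,
      exp_mulVec_of_ker _ _ hker]
  refine ⟨main, ?_⟩
  intro τ α p q _ _ hqa hqb γ _ hpst
  rw [main τ α q hqa hqb, hpst]
end

section
/- Let L be a real symmetric matrix commuting with M = (e_a - e_b)(e_a - e_b)^T (a ≠ b), let τ, α ∈ R with 2ατ an odd integer multiple of π, and suppose exp(-iτL) e_a = γ e_a for some complex γ (periodicity at a). Then exp(-iτ(L+αM)) e_b = γ e_a, i.e., the perturbed system has perfect state transfer between a and b at time τ. -/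
open Matrix Complex

open scoped Nat in
/-- Exponential of a scalar multiple of an idempotent element. -/
lemma exp_smul_idem_s8 {𝔸 : Type*} [NormedRing 𝔸] [NormedAlgebra ℂ 𝔸] [CompleteSpace 𝔸]
    (P : 𝔸) (hP : P * P = P) (s : ℂ) :
    NormedSpace.exp (s • P) = 1 + (Complex.exp s - 1) • P := by
  have hPn : ∀ k : ℕ, P ^ (k + 1) = P := by
    intro k; induction k with
    | zero => simp
    | succ k ih => rw [pow_succ, ih, hP]
  have hsum : Summable fun k : ℕ => (s ^ k / (k ! : ℂ)) • P :=
    (NormedSpace.expSeries_div_summable s).smul_const P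
  have hsum2 : Summable fun k : ℕ => (if k = 0 then (1 - P) else 0) := by
    apply summable_of_ne_finset_zero (s := {0})
    intro k hk
    simp at hk
    simp [hk]
  have hterm : ∀ k : ℕ, ((k ! : ℂ)⁻¹) • (s • P) ^ k
      = (s ^ k / (k ! : ℂ)) • P + (if k = 0 then (1 - P) else 0) := by
    intro k
    cases k with
    | zero => simp
    | succ k =>
      rw [smul_pow, hPn, smul_smul, if_neg (Nat.succ_ne_zero k), add_zero, div_eq_inv_mul]
  rw [NormedSpace.exp_eq_tsum ℂ]
  calc ∑' k : ℕ, ((k ! : ℂ)⁻¹) • (s • P) ^ k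
      = ∑' k : ℕ, ((s ^ k / (k ! : ℂ)) • P + (if k = 0 then (1 - P) else 0)) :=
        tsum_congr hterm
    _ = (∑' k : ℕ, (s ^ k / (k ! : ℂ)) • P) + ∑' k : ℕ, (if k = 0 then (1 - P) else 0) :=
        Summable.tsum_add hsum hsum2
    _ = (Complex.exp s) • P + (1 - P) := by
        rw [Summable.tsum_smul_const (NormedSpace.expSeries_div_summable s), tsum_ite_eq]
        congr 2
        rw [Complex.exp_eq_exp_ℂ, NormedSpace.exp_eq_tsum_div]
    _ = 1 + (Complex.exp s - 1) • P := by
        rw [sub_smul, one_smul]; abel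

/-- If `L` is real symmetric, commutes with `M = (e_a - e_b)(e_a - e_b)ᵀ`
(`a ≠ b`), `2ατ` is an odd multiple of `π`, and the unperturbed walk is
periodic at `a` at time `τ` (`exp(-iτL)e_a = γ e_a`), then the perturbed walk
has perfect state transfer: `exp(-iτ(L+αM)) e_b = γ e_a`. -/
theorem pst_of_periodicity_perturbed {n : ℕ}
    (L : Matrix (Fin n) (Fin n) ℝ) (hL : L.IsSymm) (a b : Fin n) (hab : a ≠ b)
    (α τ : ℝ) (hτ : ∃ k : ℤ, 2 * α * τ = (2 * k + 1) * Real.pi)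
    (hcomm :
      L * vecMulVec (Pi.single a 1 - Pi.single b 1) (Pi.single a 1 - Pi.single b 1) =
      vecMulVec (Pi.single a 1 - Pi.single b 1) (Pi.single a 1 - Pi.single b 1) * L)
    (γ : ℂ)
    (hper : NormedSpace.exp ((-(I * τ)) • L.map Complex.ofReal) *ᵥ Pi.single a 1 =
      γ • (Pi.single a 1 : Fin n → ℂ)) :
    NormedSpace.exp ((-(I * τ)) •
        (L.map Complex.ofReal + (α : ℂ) •
          vecMulVec (Pi.single a 1 - Pi.single b 1) (Pi.single a 1 - Pi.single b 1))) *ᵥ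
      Pi.single b 1 = γ • (Pi.single a 1 : Fin n → ℂ) := by
  obtain ⟨k, hk⟩ := hτ
  set u : Fin n → ℂ := Pi.single a 1 - Pi.single b 1 with hu
  set A : Matrix (Fin n) (Fin n) ℂ := L.map Complex.ofReal with hA
  set Mc : Matrix (Fin n) (Fin n) ℂ := vecMulVec u u with hMc
  -- complexified commutation
  have hmapM : Mc = (vecMulVec (Pi.single a 1 - Pi.single b 1)
      (Pi.single a 1 - Pi.single b 1) : Matrix (Fin n) (Fin n) ℝ).map Complex.ofReal := by
    ext i j
    simp only [hMc, hu, vecMulVec_apply, Matrix.map_apply, Pi.sub_apply, Pi.single_apply,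
      Complex.ofReal_mul, Complex.ofReal_sub, apply_ite Complex.ofReal, Complex.ofReal_one,
      Complex.ofReal_zero]
  have hmul : ∀ (M N : Matrix (Fin n) (Fin n) ℝ),
      (M * N).map Complex.ofReal = M.map Complex.ofReal * N.map Complex.ofReal := fun M N =>
    Matrix.map_mul (f := Complex.ofRealHom)
  have hcommℂ : Commute A Mc := by
    have := congrArg (fun M : Matrix (Fin n) (Fin n) ℝ => M.map Complex.ofReal) hcomm
    simp only [hmul] at this
    rw [Commute, SemiconjBy, hmapM, hA]
    exact this
  -- dot products
  have hua : u a = 1 := by simp [hu, Pi.single_apply, hab]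
  have hub : u b = -1 := by simp [hu, Pi.single_apply, hab.symm]
  have hudot : u ⬝ᵥ u = 2 := by
    have : u ⬝ᵥ u = u a * 1 - u b * 1 := by
      rw [hu, dotProduct_sub, dotProduct_single, dotProduct_single]
    rw [this, hua, hub]; ring
  have hMcMc : Mc * Mc = (2 : ℂ) • Mc := by
    have h1 : Mc * Mc = (u ⬝ᵥ u) • Mc := by
      ext i j
      simp only [hMc, Matrix.mul_apply, Matrix.smul_apply, vecMulVec_apply, dotProduct,
        smul_eq_mul]
      rw [Finset.sum_mul]
      exact Finset.sum_congr rfl fun l _ => by ring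
    rw [h1, hudot]
  -- split the exponential
  have hexp : NormedSpace.exp ((-(I * τ)) • (A + (α : ℂ) • Mc)) =
      NormedSpace.exp ((-(I * τ)) • A) * (1 - Mc) := by
    set c : ℂ := -(I * τ) * α with hc
    set P : Matrix (Fin n) (Fin n) ℂ := (2⁻¹ : ℂ) • Mc with hPdef
    have hP : P * P = P := by
      rw [hPdef, smul_mul_assoc, mul_smul_comm, hMcMc, smul_smul, smul_smul]
      norm_num
    have hsplit : (-(I * τ)) • (A + (α : ℂ) • Mc) = (-(I * τ)) • A + c • Mc := by
      rw [smul_add, smul_smul, hc]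
    have hcom2 : Commute ((-(I * τ)) • A) (c • Mc) :=
      (hcommℂ.smul_right c).smul_left _
    rw [hsplit, Matrix.exp_add_of_commute _ _ hcom2]
    congr 1
    have hcP : c • Mc = ((2 : ℂ) * c) • P := by
      rw [hPdef, smul_smul]; congr 1; ring
    have h2c : Complex.exp ((2 : ℂ) * c) = -1 := by
      have harg : (2 : ℂ) * c = ((-k - 1 : ℤ) : ℂ) * (2 * Real.pi * I) + Real.pi * I := by
        rw [hc]
        have h : ((2 : ℂ) * α * τ) = ((2 * (k : ℂ) + 1) * Real.pi) := by
          exact_mod_cast congrArg (Complex.ofReal) hk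
        push_cast
        push_cast at h
        linear_combination (-I) * h
      rw [harg, Complex.exp_add, Complex.exp_int_mul_two_pi_mul_I, Complex.exp_pi_mul_I, one_mul]
    letI : SeminormedRing (Matrix (Fin n) (Fin n) ℂ) := Matrix.linftyOpSemiNormedRing
    letI : NormedRing (Matrix (Fin n) (Fin n) ℂ) := Matrix.linftyOpNormedRing
    letI : NormedAlgebra ℂ (Matrix (Fin n) (Fin n) ℂ) := Matrix.linftyOpNormedAlgebra
    rw [hcP]; refine (exp_smul_idem_s8 P hP _).trans ?_; rw [h2c, hPdef, smul_smul]
    norm_num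
    exact (sub_eq_add_neg (1 : Matrix (Fin n) (Fin n) ℂ) Mc).symm
  -- action on e_b
  have hact : (1 - Mc) *ᵥ (Pi.single b 1 : Fin n → ℂ) = Pi.single a 1 := by
    have hMcb : Mc *ᵥ (Pi.single b 1 : Fin n → ℂ) = (-1 : ℂ) • u := by
      ext i
      simp only [hMc, Matrix.mulVec, vecMulVec_apply, Pi.smul_apply, smul_eq_mul]
      have : (fun j => u i * u j) ⬝ᵥ (Pi.single b 1 : Fin n → ℂ) = u i * u b * 1 :=
        dotProduct_single _ _ _
      rw [this, hub]
      ring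
    rw [Matrix.sub_mulVec, Matrix.one_mulVec, hMcb, hu]
    ext i
    simp only [Pi.sub_apply, Pi.smul_apply, smul_eq_mul]
    ring
  rw [hexp, ← Matrix.mulVec_mulVec, hact, hper]
end

section
/- Let L be a real symmetric matrix commuting with M = (e_a - e_b)(e_a - e_b)^T (a ≠ b), and let p ∉ {a,b}. If exp(-iτL) e_p = γ e_p for some complex γ, then also exp(-iτ(L+αM)) e_p = γ e_p for every real α: periodicity at vertices outside {a,b} is preserved under the perturbation. -/
open Matrix Complex

lemma exp_mulVec_of_zero {n : ℕ} (B : Matrix (Fin n) (Fin n) ℂ) (v : Fin n → ℂ)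
    (h : B *ᵥ v = 0) : NormedSpace.exp B *ᵥ v = v := by
  letI : SeminormedRing (Matrix (Fin n) (Fin n) ℂ) := Matrix.linftyOpSemiNormedRing
  letI : NormedRing (Matrix (Fin n) (Fin n) ℂ) := Matrix.linftyOpNormedRing
  letI : NormedAlgebra ℂ (Matrix (Fin n) (Fin n) ℂ) := Matrix.linftyOpNormedAlgebra
  let T : Matrix (Fin n) (Fin n) ℂ →ₗ[ℂ] (Fin n → ℂ) :=
    { toFun := fun X => X *ᵥ v,
      map_add' := fun X Y => Matrix.add_mulVec X Y v,
      map_smul' := fun c X => Matrix.smul_mulVec c X v }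
  have hT : Continuous T := T.continuous_of_finiteDimensional
  have hsum : Summable (fun k : ℕ => ((Nat.factorial k : ℂ))⁻¹ • B ^ k) :=
    NormedSpace.expSeries_summable' B
  have key : NormedSpace.exp B *ᵥ v = ∑' k : ℕ, ((Nat.factorial k : ℂ))⁻¹ • (B ^ k *ᵥ v) := by
    rw [NormedSpace.exp_eq_tsum ℂ]
    have := (⟨T, hT⟩ : Matrix (Fin n) (Fin n) ℂ →L[ℂ] (Fin n → ℂ)).map_tsum hsum
    simpa [T, Matrix.smul_mulVec] using this
  rw [key, tsum_eq_single 0]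
  · simp [Matrix.one_mulVec]
  · intro k hk
    obtain ⟨j, rfl⟩ := Nat.exists_eq_succ_of_ne_zero hk
    rw [pow_succ, ← Matrix.mulVec_mulVec, h]
    simp

/-- If `L` is real symmetric, commutes with `M = (e_a - e_b)(e_a - e_b)ᵀ`
(`a ≠ b`), and `p ∉ {a,b}`, then periodicity at `p` is preserved under the
perturbation `L ↦ L + αM`. -/
theorem periodicity_preserved_outside {n : ℕ}
    (L : Matrix (Fin n) (Fin n) ℝ) (hL : L.IsSymm) (a b : Fin n) (hab : a ≠ b)
    (hcomm :
      L * vecMulVec (Pi.single a 1 - Pi.single b 1) (Pi.single a 1 - Pi.single b 1) =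
      vecMulVec (Pi.single a 1 - Pi.single b 1) (Pi.single a 1 - Pi.single b 1) * L)
    (p : Fin n) (hpa : p ≠ a) (hpb : p ≠ b) (α τ : ℝ) (γ : ℂ)
    (hper : NormedSpace.exp ((-(I * τ)) • L.map Complex.ofReal) *ᵥ Pi.single p 1 =
      γ • (Pi.single p 1 : Fin n → ℂ)) :
    NormedSpace.exp ((-(I * τ)) •
        (L.map Complex.ofReal + (α : ℂ) •
          vecMulVec (Pi.single a 1 - Pi.single b 1) (Pi.single a 1 - Pi.single b 1))) *ᵥ
      Pi.single p 1 = γ • (Pi.single p 1 : Fin n → ℂ) := by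
  set v : Fin n → ℂ := Pi.single a 1 - Pi.single b 1 with hv
  set Mc : Matrix (Fin n) (Fin n) ℂ := vecMulVec v v with hMc
  set Lc : Matrix (Fin n) (Fin n) ℂ := L.map Complex.ofReal with hLc
  -- map of the real vecMulVec
  have hvr : ∀ i, ((Pi.single a 1 - Pi.single b 1 : Fin n → ℝ) i : ℂ) = v i := by
    intro i
    rw [hv]
    by_cases hia : i = a <;> by_cases hib : i = b <;>
      simp [Pi.single_apply, hia, hib, hab]
  have hmap : (vecMulVec (Pi.single a 1 - Pi.single b 1)
      (Pi.single a 1 - Pi.single b 1) : Matrix (Fin n) (Fin n) ℝ).map Complex.ofReal = Mc := by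
    ext i j
    rw [hMc]
    simp only [Matrix.map_apply, Matrix.vecMulVec_apply, Complex.ofReal_mul, hvr]
  have hmul : ∀ (X Y : Matrix (Fin n) (Fin n) ℝ),
      (X * Y).map Complex.ofReal = X.map Complex.ofReal * Y.map Complex.ofReal := by
    intro X Y
    ext i j
    simp [Matrix.mul_apply, Matrix.map_apply]
  -- commutation over ℂ
  have hLM : Lc * Mc = Mc * Lc := by
    have := congrArg (fun X : Matrix (Fin n) (Fin n) ℝ => X.map Complex.ofReal) hcomm
    simp only [hmul, hmap] at this
    rw [hLc]
    exact this
  -- Mc kills e_p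
  have hMp : Mc *ᵥ (Pi.single p 1 : Fin n → ℂ) = 0 := by
    have hvp : v p = 0 := by simp [hv, Pi.single_apply, hpa, hpb]
    ext i
    simp [Mc, Matrix.mulVec_single, Matrix.vecMulVec_apply, hvp]
  set A : Matrix (Fin n) (Fin n) ℂ := (-(I * τ)) • Lc with hA
  set B : Matrix (Fin n) (Fin n) ℂ := (-(I * τ)) • ((α : ℂ) • Mc) with hB
  have hsplit : (-(I * τ)) • (Lc + (α : ℂ) • Mc) = A + B := by
    rw [smul_add]
  have hAB : Commute A B := by
    simp only [Commute, SemiconjBy, hA, hB]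
    rw [Matrix.smul_mul, Matrix.mul_smul, Matrix.smul_mul, Matrix.mul_smul,
      Matrix.smul_mul, Matrix.mul_smul, hLM]
    simp only [smul_smul]
    ring_nf
  have hBp : B *ᵥ (Pi.single p 1 : Fin n → ℂ) = 0 := by
    rw [hB, Matrix.smul_mulVec, Matrix.smul_mulVec, hMp]
    simp
  rw [hsplit, Matrix.exp_add_of_commute A B hAB, ← Matrix.mulVec_mulVec,
    exp_mulVec_of_zero B _ hBp]
  exact hper
end

section
/- Let n be divisible by 4 and let L be the Laplacian of K_n. For any pair of distinct vertices a, b, the graph K_n minus the edge {a,b}, with Laplacian L' = L - (e_a - e_b)(e_a - e_b)^T, exhibits Laplacian perfect state transfer between a and b at time π/2: exp(-i(π/2)L') e_a = γ e_b for some unimodular complex γ. -/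
open Matrix Complex

lemma pow_mulVec_eigen {n : ℕ} (A : Matrix (Fin n) (Fin n) ℂ) (x : Fin n → ℂ) (c : ℂ)
    (h : A *ᵥ x = c • x) : ∀ k : ℕ, A ^ k *ᵥ x = c ^ k • x := by
  intro k
  induction k with
  | zero => simp
  | succ k ih =>
    rw [pow_succ', ← Matrix.mulVec_mulVec, ih, Matrix.mulVec_smul, h, smul_smul, ← pow_succ]

lemma exp_mulVec_eigen {n : ℕ} (A : Matrix (Fin n) (Fin n) ℂ) (x : Fin n → ℂ) (c : ℂ)
    (h : A *ᵥ x = c • x) :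
    NormedSpace.exp A *ᵥ x = Complex.exp c • x := by
  letI : SeminormedRing (Matrix (Fin n) (Fin n) ℂ) := Matrix.linftyOpSemiNormedRing
  letI : NormedRing (Matrix (Fin n) (Fin n) ℂ) := Matrix.linftyOpNormedRing
  letI : NormedAlgebra ℂ (Matrix (Fin n) (Fin n) ℂ) := Matrix.linftyOpNormedAlgebra
  let f : Matrix (Fin n) (Fin n) ℂ →ₗ[ℂ] (Fin n → ℂ) :=
    { toFun := fun M => M *ᵥ x
      map_add' := fun M N => Matrix.add_mulVec M N x
      map_smul' := fun c M => Matrix.smul_mulVec c M x }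
  have hf : Continuous f := LinearMap.continuous_of_finiteDimensional f
  let F : Matrix (Fin n) (Fin n) ℂ →L[ℂ] (Fin n → ℂ) := ⟨f, hf⟩
  have hsum : Summable fun k : ℕ => (k.factorial : ℂ)⁻¹ • A ^ k :=
    NormedSpace.expSeries_summable' (𝕂 := ℂ) A
  have := F.map_tsum hsum
  have hF : NormedSpace.exp A *ᵥ x = F (NormedSpace.exp A) := rfl
  rw [hF, NormedSpace.exp_eq_tsum ℂ, this]
  have : ∀ k : ℕ, F ((k.factorial : ℂ)⁻¹ • A ^ k) = ((k.factorial : ℂ)⁻¹ * c ^ k) • x := by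
    intro k
    show ((k.factorial : ℂ)⁻¹ • A ^ k) *ᵥ x = _
    rw [Matrix.smul_mulVec, pow_mulVec_eigen A x c h k, smul_smul]
  simp_rw [this]
  have hsc : Summable fun k : ℕ => (k.factorial : ℂ)⁻¹ * c ^ k :=
    ((NormedSpace.expSeries_summable' (𝕂 := ℂ) c).congr fun k => smul_eq_mul _ _)
  rw [Summable.tsum_smul_const hsc, Complex.exp_eq_exp_ℂ, NormedSpace.exp_eq_tsum ℂ]
  all_goals first
    | exact hsc
    | exact congrArg (· • x) (tsum_congr fun k => (smul_eq_mul _ _).symm)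

lemma Lp_mulVec {n : ℕ} (a b : Fin n) (x : Fin n → ℂ) :
    (((n : ℂ) • 1 - Matrix.of fun _ _ => (1 : ℂ)) -
        vecMulVec (Pi.single a 1 - Pi.single b 1) (Pi.single a 1 - Pi.single b 1)) *ᵥ x
      = (n : ℂ) • x - (∑ j, x j) • (fun _ => (1:ℂ))
        - (x a - x b) • (Pi.single a 1 - Pi.single b 1) := by
  set d : Fin n → ℂ := Pi.single a 1 - Pi.single b 1 with hd
  have hdx : ∑ j, d j * x j = x a - x b := by
    simp [hd, Pi.single_apply, sub_mul, ite_mul, Finset.sum_sub_distrib]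
  have hJ : (Matrix.of fun _ _ => (1:ℂ) : Matrix (Fin n) (Fin n) ℂ) *ᵥ x
      = fun _ : Fin n => ∑ j, x j := by
    funext i; simp [Matrix.mulVec, dotProduct]
  have hM : vecMulVec d d *ᵥ x = (x a - x b) • d := by
    funext i
    simp only [Matrix.mulVec, dotProduct, vecMulVec_apply, mul_assoc, ← Finset.mul_sum, hdx,
      Pi.smul_apply, smul_eq_mul]
    ring
  rw [Matrix.sub_mulVec, Matrix.sub_mulVec, Matrix.smul_mulVec, Matrix.one_mulVec, hJ, hM]
  funext i
  simp

/-- For `4 ∣ n` and distinct vertices `a, b`, the complete graph `K_n` with the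
edge `{a,b}` deleted (Laplacian `L' = (nI - J) - (e_a-e_b)(e_a-e_b)ᵀ`) exhibits
Laplacian perfect state transfer between `a` and `b` at time `π/2`. -/
theorem complete_graph_minus_edge_pst {n : ℕ} (hn : 4 ∣ n) (a b : Fin n)
    (hab : a ≠ b) :
    let L' : Matrix (Fin n) (Fin n) ℂ :=
      ((n : ℂ) • 1 - Matrix.of fun _ _ => (1 : ℂ)) -
        vecMulVec (Pi.single a 1 - Pi.single b 1) (Pi.single a 1 - Pi.single b 1)
    ∃ γ : ℂ, ‖γ‖ = 1 ∧
      NormedSpace.exp ((-(I * (Real.pi / 2))) • L') *ᵥ Pi.single a 1 =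
        γ • (Pi.single b 1 : Fin n → ℂ) := by
  intro L'
  have hnpos : 0 < n := a.pos
  have hn0 : (n : ℂ) ≠ 0 := Nat.cast_ne_zero.2 hnpos.ne'
  set t : ℂ := -(I * (Real.pi / 2)) with ht
  set d : Fin n → ℂ := Pi.single a 1 - Pi.single b 1 with hd
  set ones : Fin n → ℂ := fun _ => 1 with hones
  set u : Fin n → ℂ := (Pi.single a 1 + Pi.single b 1) - ((2 : ℂ)/n) • ones with hu
  -- eigen equations for L'
  have H1 : L' *ᵥ ones = (0 : ℂ) • ones := by
    rw [show L' *ᵥ ones = _ from Lp_mulVec a b ones]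
    funext j
    simp [hones, hd, Pi.single_apply]
  have H2 : L' *ᵥ d = ((n : ℂ) - 2) • d := by
    rw [show L' *ᵥ d = _ from Lp_mulVec a b d]
    have hsum : ∑ j, d j = 0 := by
      simp [hd, Pi.single_apply, Finset.sum_sub_distrib]
    have hda : d a = 1 := by simp [hd, Pi.single_apply, hab.symm]
    have hdb : d b = -1 := by simp [hd, Pi.single_apply, hab]
    rw [hsum, hda, hdb]
    funext j
    simp only [hd, sub_smul, Pi.sub_apply, Pi.smul_apply, smul_eq_mul]
    ring
  have H3 : L' *ᵥ u = (n : ℂ) • u := by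
    rw [show L' *ᵥ u = _ from Lp_mulVec a b u]
    have hsum : ∑ j, u j = 0 := by
      simp [hu, hones, Pi.single_apply, Finset.sum_sub_distrib, Finset.sum_add_distrib]
      field_simp
      ring
    have hua : u a = 1 - 2/n := by simp [hu, hones, Pi.single_apply, hab.symm]
    have hub : u b = 1 - 2/n := by simp [hu, hones, Pi.single_apply, hab]
    rw [hsum, hua, hub]
    funext j
    simp
  -- eigen equations for t • L'
  have E1 := exp_mulVec_eigen (t • L') ones (t * 0)
    (by rw [Matrix.smul_mulVec, H1, smul_smul])
  have E2 := exp_mulVec_eigen (t • L') d (t * ((n : ℂ) - 2))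
    (by rw [Matrix.smul_mulVec, H2, smul_smul])
  have E3 := exp_mulVec_eigen (t • L') u (t * (n : ℂ))
    (by rw [Matrix.smul_mulVec, H3, smul_smul])
  -- exponential values
  obtain ⟨m, hm⟩ := hn
  have hc2 : Complex.exp (t * (n : ℂ)) = 1 := by
    have : t * (n : ℂ) = ((-(m : ℤ) : ℤ) : ℂ) * (2 * Real.pi * I) := by
      rw [ht, hm]; push_cast; ring
    rw [this, Complex.exp_int_mul_two_pi_mul_I]
  have hc3 : Complex.exp (t * ((n : ℂ) - 2)) = -1 := by
    have : t * ((n : ℂ) - 2) = t * (n : ℂ) + Real.pi * I := by rw [ht]; ring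
    rw [this, Complex.exp_add, hc2, Complex.exp_pi_mul_I, one_mul]
  have hc1 : Complex.exp (t * 0) = 1 := by rw [mul_zero, Complex.exp_zero]
  rw [hc1] at E1; rw [hc3] at E2; rw [hc2] at E3
  -- decomposition of e_a
  have hdecomp : (Pi.single a 1 : Fin n → ℂ)
      = (2⁻¹ : ℂ) • d + ((2⁻¹ : ℂ) • u + ((n : ℂ)⁻¹) • ones) := by
    funext j
    by_cases hja : j = a <;> by_cases hjb : j = b <;>
      simp [hja, hjb, hd, hu, hones, Pi.single_apply, hab, hab.symm] <;>
      field_simp <;> ring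
  refine ⟨1, by simp, ?_⟩
  rw [hdecomp, Matrix.mulVec_add, Matrix.mulVec_add, Matrix.mulVec_smul, Matrix.mulVec_smul,
    Matrix.mulVec_smul, E1, E2, E3]
  funext j
  by_cases hja : j = a <;> by_cases hjb : j = b <;>
    simp [hja, hjb, hd, hu, hones, Pi.single_apply, hab, hab.symm] <;>
    field_simp <;> ring
end

section
/- Let n be divisible by 4 and let F be a set of pairwise disjoint edges (a perfect or partial matching) of the complete graph K_n. Let L' be the Laplacian of K_n with all edges of F deleted. Then for each edge {a,b} ∈ F, exp(-i(π/2)L') e_a = γ e_b for some unimodular γ; i.e., Laplacian perfect state transfer occurs at time π/2 between the endpoints of every deleted edge. -/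
open Matrix Complex

private lemma sum_mulVec' {n : ℕ} {ι : Type*} (s : Finset ι)
    (M : ι → Matrix (Fin n) (Fin n) ℂ) (x : Fin n → ℂ) :
    (∑ i ∈ s, M i) *ᵥ x = ∑ i ∈ s, (M i *ᵥ x) := by
  funext j
  simp only [mulVec, dotProduct, Matrix.sum_apply, Finset.sum_apply, Finset.sum_mul]
  exact Finset.sum_comm

private lemma vecMulVec_mulVec' {n : ℕ} (w u x : Fin n → ℂ) :
    vecMulVec w u *ᵥ x = (u ⬝ᵥ x) • w := by
  funext i
  simp [vecMulVec, mulVec, dotProduct, Finset.mul_sum, mul_assoc, mul_comm, mul_left_comm]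

private lemma exp_mulVec_eigenvector {n : ℕ} (A : Matrix (Fin n) (Fin n) ℂ)
    (v : Fin n → ℂ) (μ : ℂ) (h : A *ᵥ v = μ • v) :
    NormedSpace.exp A *ᵥ v = Complex.exp μ • v := by
  letI : SeminormedRing (Matrix (Fin n) (Fin n) ℂ) := Matrix.linftyOpSemiNormedRing
  letI : NormedRing (Matrix (Fin n) (Fin n) ℂ) := Matrix.linftyOpNormedRing
  letI : NormedAlgebra ℂ (Matrix (Fin n) (Fin n) ℂ) := Matrix.linftyOpNormedAlgebra
  have hpow : ∀ k : ℕ, A ^ k *ᵥ v = μ ^ k • v := by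
    intro k
    induction k with
    | zero => simp
    | succ k ih =>
      rw [pow_succ', pow_succ', ← mulVec_mulVec, ih, mulVec_smul, h, smul_smul,
        mul_comm, ← smul_smul]
  let f : Matrix (Fin n) (Fin n) ℂ →ₗ[ℂ] (Fin n → ℂ) :=
    { toFun := fun B => B *ᵥ v
      map_add' := fun B C => add_mulVec B C v
      map_smul' := fun c B => smul_mulVec c B v }
  have hf : Continuous f := f.continuous_of_finiteDimensional
  have hmt := ContinuousLinearMap.map_tsum ⟨f, hf⟩
    (NormedSpace.expSeries_summable' (𝕂 := ℂ) A)
  rw [Complex.exp_eq_exp_ℂ, NormedSpace.exp_eq_tsum (𝕂 := ℂ), NormedSpace.exp_eq_tsum (𝕂 := ℂ)]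
  have : (∑' k : ℕ, (k.factorial⁻¹ : ℂ) • A ^ k) *ᵥ v
      = ∑' k : ℕ, (k.factorial⁻¹ : ℂ) • (A ^ k *ᵥ v) := by
    simpa [f, smul_mulVec] using hmt
  rw [this]
  simp_rw [hpow, smul_smul]
  have hs : Summable fun k : ℕ => ((k.factorial : ℂ)⁻¹ * μ ^ k) := by
    simpa [smul_eq_mul] using NormedSpace.expSeries_summable' (𝕂 := ℂ) μ
  rw [hs.tsum_smul_const]
  simp [smul_eq_mul]

/-- Let `4 ∣ n` and let `F` be a matching of `K_n` (pairwise vertex-disjoint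
edges). Deleting the edges of `F` from `K_n` yields Laplacian perfect state
transfer at time `π/2` between the endpoints of every deleted edge. -/
theorem complete_graph_minus_matching_pst {n : ℕ} (hn : 4 ∣ n)
    (F : Finset (Fin n × Fin n))
    (hF : ∀ e ∈ F, e.1 ≠ e.2)
    (hdisj : ∀ e ∈ F, ∀ f ∈ F, e ≠ f →
      e.1 ≠ f.1 ∧ e.1 ≠ f.2 ∧ e.2 ≠ f.1 ∧ e.2 ≠ f.2) :
    let L' : Matrix (Fin n) (Fin n) ℂ :=
      ((n : ℂ) • 1 - Matrix.of fun _ _ => (1 : ℂ)) -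
        ∑ e ∈ F, vecMulVec (Pi.single e.1 1 - Pi.single e.2 1)
          (Pi.single e.1 1 - Pi.single e.2 1)
    ∀ e ∈ F, ∃ γ : ℂ, ‖γ‖ = 1 ∧
      NormedSpace.exp ((-(I * (Real.pi / 2))) • L') *ᵥ Pi.single e.1 1 =
        γ • (Pi.single e.2 1 : Fin n → ℂ) := by
  intro L' e he
  obtain ⟨k, hk⟩ := hn
  have hab : e.1 ≠ e.2 := hF e he
  have hnpos : 0 < n := e.1.pos
  have hn0 : (n : ℂ) ≠ 0 := Nat.cast_ne_zero.2 hnpos.ne'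
  set one : Fin n → ℂ := fun _ => 1 with hone
  set uf : Fin n × Fin n → (Fin n → ℂ) :=
    fun f => Pi.single f.1 1 - Pi.single f.2 1 with huf
  set w : Fin n → ℂ :=
    (n : ℂ) • (Pi.single e.1 1 + Pi.single e.2 1) - (2 : ℂ) • one with hw
  -- action of L'
  have hmul : ∀ x : Fin n → ℂ, L' *ᵥ x =
      (n : ℂ) • x - (∑ j, x j) • one - ∑ f ∈ F, ((uf f ⬝ᵥ x) • uf f) := by
    intro x
    show (((n : ℂ) • 1 - Matrix.of fun _ _ => (1 : ℂ)) -
        ∑ f ∈ F, vecMulVec (uf f) (uf f)) *ᵥ x = _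
    rw [sub_mulVec, sub_mulVec, smul_mulVec, one_mulVec, sum_mulVec']
    congr 1
    · congr 1
      funext i
      simp [mulVec, dotProduct, hone]
    · exact Finset.sum_congr rfl fun f _ => vecMulVec_mulVec' _ _ _
  -- dot products
  have dpone : ∀ f, uf f ⬝ᵥ one = 0 := by
    intro f
    simp [huf, sub_dotProduct, single_dotProduct, hone]
  have dps : ∀ f i, uf f ⬝ᵥ Pi.single i 1 =
      (if i = f.1 then 1 else 0) - (if i = f.2 then 1 else 0) := by
    intro f i
    simp [huf, sub_dotProduct, single_dotProduct, Pi.single_apply]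
  have dpd : ∀ f ∈ F, f ≠ e → uf f ⬝ᵥ uf e = 0 := by
    intro f hf hfe
    obtain ⟨h1, h2, h3, h4⟩ := hdisj f hf e he hfe
    rw [huf, dotProduct_sub]
    rw [dps, dps]
    simp [Ne.symm h1, Ne.symm h2, Ne.symm h3, Ne.symm h4]
  have dde : uf e ⬝ᵥ uf e = 2 := by
    conv_lhs => rw [huf, dotProduct_sub]
    rw [dps, dps]
    simp [hab, Ne.symm hab]
    norm_num
  have dpw : ∀ f ∈ F, uf f ⬝ᵥ w = 0 := by
    intro f hf
    rw [hw, dotProduct_sub, dotProduct_smul, dotProduct_smul, dotProduct_add,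
      dps, dps, dpone]
    rcases eq_or_ne f e with rfl | hfe
    · simp [hab, Ne.symm hab]
    · obtain ⟨h1, h2, h3, h4⟩ := hdisj f hf e he hfe
      simp [Ne.symm h1, Ne.symm h2, Ne.symm h3, Ne.symm h4]
  -- eigenvector facts
  have h1 : L' *ᵥ one = (0 : ℂ) • one := by
    rw [hmul]
    have hFs : ∑ f ∈ F, (uf f ⬝ᵥ one) • uf f = 0 :=
      Finset.sum_eq_zero fun f _ => by rw [dpone f, zero_smul]
    have hso : (∑ j : Fin n, one j) = (n : ℂ) := by simp [hone]
    rw [hFs, hso]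
    module
  have h2 : L' *ᵥ uf e = ((n : ℂ) - 2) • uf e := by
    rw [hmul]
    have hs0 : (∑ j : Fin n, uf e j) = 0 := by
      simp [huf, Finset.sum_sub_distrib, Pi.single_apply]
    have hFs : ∑ f ∈ F, (uf f ⬝ᵥ uf e) • uf f = (2 : ℂ) • uf e := by
      rw [Finset.sum_eq_single e (fun f hf hfe => by rw [dpd f hf hfe, zero_smul])
        (fun h => absurd he h), dde]
    rw [hs0, hFs]
    module
  have h3 : L' *ᵥ w = (n : ℂ) • w := by
    rw [hmul]
    have hs0 : (∑ j : Fin n, w j) = 0 := by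
      simp [hw, Finset.sum_sub_distrib, Finset.sum_add_distrib, Pi.single_apply,
        hone, Finset.mul_sum]
      ring
    have hFs : ∑ f ∈ F, (uf f ⬝ᵥ w) • uf f = 0 :=
      Finset.sum_eq_zero fun f hf => by rw [dpw f hf, zero_smul]
    rw [hs0, hFs]
    module
  -- scaled eigenvalues
  set s : ℂ := -(I * ((Real.pi : ℂ) / 2)) with hs
  have hsL : ∀ (x : Fin n → ℂ) (μ : ℂ), L' *ᵥ x = μ • x →
      (s • L') *ᵥ x = (s * μ) • x := by
    intro x μ h
    rw [smul_mulVec, h, smul_smul]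
  have E1 := exp_mulVec_eigenvector (s • L') one (s * 0) (hsL _ _ h1)
  have E2 := exp_mulVec_eigenvector (s • L') (uf e) (s * ((n : ℂ) - 2)) (hsL _ _ h2)
  have E3 := exp_mulVec_eigenvector (s • L') w (s * (n : ℂ)) (hsL _ _ h3)
  -- exponential values
  have c1 : Complex.exp (s * 0) = 1 := by simp
  have c3 : Complex.exp (s * (n : ℂ)) = 1 := by
    have : s * (n : ℂ) = ((-(k : ℤ) : ℤ) : ℂ) * (2 * (Real.pi : ℂ) * I) := by
      rw [hs, hk]
      push_cast
      ring
    rw [this, Complex.exp_int_mul_two_pi_mul_I]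
  have c2 : Complex.exp (s * ((n : ℂ) - 2)) = -1 := by
    have : s * ((n : ℂ) - 2) = s * (n : ℂ) + (Real.pi : ℂ) * I := by
      rw [hs]; ring
    rw [this, Complex.exp_add, c3, Complex.exp_pi_mul_I, one_mul]
  rw [c1] at E1
  rw [c2] at E2
  rw [c3] at E3
  -- decomposition
  have hdec : (2 * (n : ℂ)) • (Pi.single e.1 1 : Fin n → ℂ) =
      (2 : ℂ) • one + (n : ℂ) • uf e + w := by
    rw [hw, huf]
    module
  have final : NormedSpace.exp (s • L') *ᵥ
      ((2 * (n : ℂ)) • (Pi.single e.1 1 : Fin n → ℂ)) =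
      (2 * (n : ℂ)) • (Pi.single e.2 1 : Fin n → ℂ) := by
    rw [hdec, mulVec_add, mulVec_add, mulVec_smul, mulVec_smul, E1, E2, E3]
    rw [huf, hw]
    module
  rw [mulVec_smul] at final
  have h2n0 : (2 * (n : ℂ)) ≠ 0 := mul_ne_zero two_ne_zero hn0
  refine ⟨1, by simp, ?_⟩
  have := smul_right_injective (Fin n → ℂ) h2n0 final
  rw [one_smul]
  exact this
end

section
/- Let L be a real symmetric matrix commuting with M = (e_a - e_b)(e_a - e_b)^T (a ≠ b), α ∈ R, and let (τ_k) be a real sequence with 2ατ_k ∈ π(2Z+1) for all k. If exp(-iτ_k L) e_a → γ e_a as k → ∞ for some complex γ (almost periodicity at a along τ_k), then exp(-iτ_k (L + αM)) e_b → γ e_a as k → ∞; i.e., the perturbed system exhibits pretty good state transfer between a and b along the sequence (τ_k). -/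
set_option linter.unusedVariables false
set_option linter.unusedTactic false

open Matrix Complex Filter Nat

attribute [local instance] Matrix.linftyOpNormedAddCommGroup Matrix.linftyOpNormedRing
  Matrix.linftyOpNormedAlgebra

lemma exp_smul_quad {N : ℕ} (A : Matrix (Fin N) (Fin N) ℂ)
    (hA : A * A = (2:ℂ) • A) (c : ℂ) :
    NormedSpace.exp (c • A) = 1 + ((Complex.exp (2*c) - 1)/2) • A := by
  have hpow : ∀ k : ℕ, A ^ (k+1) = ((2:ℂ)^k) • A := by
    intro k; induction k with
    | zero => simp
    | succ k ih => rw [pow_succ, ih, smul_mul_assoc, hA, smul_smul, ← pow_succ]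
  have hsum : Summable (fun k : ℕ => ((k ! : ℂ))⁻¹ • (c • A)^k) :=
    NormedSpace.expSeries_summable' (c • A)
  have hterm : ∀ k : ℕ, (((k+1)! : ℂ))⁻¹ • (c • A)^(k+1)
      = ((((k+1)! : ℂ))⁻¹ * c^(k+1) * 2^k) • A := by
    intro k
    rw [smul_pow, hpow, smul_smul, smul_smul, mul_assoc]
  have hscal : Summable (fun k : ℕ => (((k+1)! : ℂ))⁻¹ * c^(k+1) * 2^k) := by
    have h1 : Summable (fun k : ℕ => (2*c)^k / (k ! : ℂ)) :=
      NormedSpace.expSeries_div_summable (2*c)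
    have h2 : Summable (fun k : ℕ => (2*c)^(k+1) / ((k+1)! : ℂ)) :=
      (summable_nat_add_iff (f := fun k : ℕ => (2*c)^k / (k ! : ℂ)) 1).mpr h1
    have := h2.div_const 2
    refine this.congr fun k => ?_
    have hk : ((k+1)! : ℂ) ≠ 0 := Nat.cast_ne_zero.mpr (Nat.factorial_ne_zero _)
    field_simp
    ring
  have hval : ∑' k : ℕ, (((k+1)! : ℂ))⁻¹ * c^(k+1) * 2^k = (Complex.exp (2*c) - 1)/2 := by
    have h1 : Complex.exp (2*c) = ∑' k : ℕ, (2*c)^k / (k ! : ℂ) := by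
      rw [Complex.exp_eq_exp_ℂ, NormedSpace.exp_eq_tsum_div]
    have h2 : Summable (fun k : ℕ => (2*c)^k / (k ! : ℂ)) :=
      NormedSpace.expSeries_div_summable (2*c)
    rw [h2.tsum_eq_zero_add] at h1
    simp only [pow_zero, Nat.factorial_zero, Nat.cast_one, div_one] at h1
    have h3 : ∑' k : ℕ, (2*c)^(k+1) / ((k+1)! : ℂ)
        = ∑' k : ℕ, 2 * ((((k+1)! : ℂ))⁻¹ * c^(k+1) * 2^k) := by
      refine tsum_congr fun k => ?_
      have hk : ((k+1)! : ℂ) ≠ 0 := Nat.cast_ne_zero.mpr (Nat.factorial_ne_zero _)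
      field_simp
      ring
    rw [h3, tsum_mul_left] at h1
    rw [h1]; ring
  calc NormedSpace.exp (c • A) = ∑' k : ℕ, ((k ! : ℂ))⁻¹ • (c • A)^k := by
        rw [NormedSpace.exp_eq_tsum (𝕂 := ℂ)]
    _ = ((0! : ℂ))⁻¹ • (c • A)^0 + ∑' k : ℕ, (((k+1)! : ℂ))⁻¹ • (c • A)^(k+1) :=
        hsum.tsum_eq_zero_add
    _ = 1 + ∑' k : ℕ, ((((k+1)! : ℂ))⁻¹ * c^(k+1) * 2^k) • A := by
        rw [tsum_congr hterm]; simp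
    _ = 1 + ((Complex.exp (2*c) - 1)/2) • A := by
        rw [hscal.tsum_smul_const, hval]

/-- If `L` is real symmetric, commutes with `M = (e_a - e_b)(e_a - e_b)ᵀ`
(`a ≠ b`), `2ατ_k` is an odd multiple of `π` for every `k`, and
`exp(-iτ_k L) e_a → γ e_a`, then `exp(-iτ_k (L + αM)) e_b → γ e_a`:
pretty good state transfer between `a` and `b` along `(τ_k)`. -/
theorem pgst_of_almost_periodicity {n : ℕ}
    (L : Matrix (Fin n) (Fin n) ℝ) (hL : L.IsSymm) (a b : Fin n) (hab : a ≠ b)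
    (α : ℝ) (τ : ℕ → ℝ) (hτ : ∀ k, ∃ m : ℤ, 2 * α * τ k = (2 * m + 1) * Real.pi)
    (hcomm :
      L * vecMulVec (Pi.single a 1 - Pi.single b 1) (Pi.single a 1 - Pi.single b 1) =
      vecMulVec (Pi.single a 1 - Pi.single b 1) (Pi.single a 1 - Pi.single b 1) * L)
    (γ : ℂ)
    (hap : Tendsto
      (fun k => NormedSpace.exp ((-(I * τ k)) • L.map Complex.ofReal) *ᵥ
        Pi.single a 1)
      atTop (nhds (γ • (Pi.single a 1 : Fin n → ℂ)))) :
    Tendsto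
      (fun k => NormedSpace.exp ((-(I * τ k)) •
        (L.map Complex.ofReal + (α : ℂ) •
          vecMulVec (Pi.single a 1 - Pi.single b 1) (Pi.single a 1 - Pi.single b 1))) *ᵥ
        Pi.single b 1)
      atTop (nhds (γ • (Pi.single a 1 : Fin n → ℂ))) := by
  set w : Fin n → ℂ := Pi.single a 1 - Pi.single b 1 with hw
  set Mc : Matrix (Fin n) (Fin n) ℂ := vecMulVec w w with hMc
  set A : Matrix (Fin n) (Fin n) ℂ := L.map Complex.ofReal with hA
  -- the real rank-one matrix maps to Mc
  have hmap : (vecMulVec (Pi.single a 1 - Pi.single b 1) (Pi.single a 1 - Pi.single b 1)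
      : Matrix (Fin n) (Fin n) ℝ).map Complex.ofReal = Mc := by
    have hwcast : ∀ i, ((Pi.single a 1 - Pi.single b 1 : Fin n → ℝ) i : ℂ) = w i := by
      intro i
      simp [hw, Pi.single_apply, apply_ite Complex.ofReal]
    ext i j
    simp only [Matrix.map_apply, vecMulVec_apply, Complex.ofReal_mul, hwcast, hMc]
  have hcommC : Commute A Mc := by
    have h1 := congrArg (fun X : Matrix (Fin n) (Fin n) ℝ => X.map Complex.ofRealHom) hcomm
    simp only [Matrix.map_mul] at h1
    rw [Commute, SemiconjBy, hA, ← hmap]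
    exact h1
  have hwb : w b = -1 := by simp [hw, Pi.single_apply, hab]
  have hMsq : Mc * Mc = (2:ℂ) • Mc := by
    have hww : ∑ k : Fin n, w k * w k = 2 := by
      simp [hw, Pi.single_apply, Finset.sum_ite_eq', sub_mul, mul_sub, Finset.sum_sub_distrib,
        hab, hab.symm]
      norm_num
    ext i j
    simp only [Matrix.mul_apply, vecMulVec_apply, Matrix.smul_apply, smul_eq_mul]
    calc ∑ k : Fin n, w i * w k * (w k * w j)
        = (∑ k : Fin n, w k * w k) * (w i * w j) := by rw [Finset.sum_mul]; congr 1; ext k; ring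
      _ = 2 * (w i * w j) := by rw [hww]
  have hMb : Mc *ᵥ (Pi.single b 1 : Fin n → ℂ) = -w := by
    ext i
    simp [hMc, Matrix.mulVec, dotProduct, vecMulVec_apply, Pi.single_apply, mul_ite, hwb]
  have key : ∀ k, NormedSpace.exp ((-(I * τ k)) • (A + (α : ℂ) • Mc)) *ᵥ
      (Pi.single b 1 : Fin n → ℂ)
      = NormedSpace.exp ((-(I * τ k)) • A) *ᵥ Pi.single a 1 := by
    intro k
    set c : ℂ := (-(I * τ k)) * α with hc
    have hsplit : (-(I * τ k)) • (A + (α : ℂ) • Mc) = (-(I * τ k)) • A + c • Mc := by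
      rw [smul_add, smul_smul, hc]
    have hcomm2 : Commute ((-(I * τ k)) • A) (c • Mc) :=
      (hcommC.smul_left _).smul_right _
    have hexp2c : Complex.exp (2 * c) = -1 := by
      obtain ⟨m, hm⟩ := hτ k
      have h0 : ((2 * α * τ k : ℝ) : ℂ) = (((2 * m + 1) * Real.pi : ℝ) : ℂ) := by rw [hm]
      push_cast at h0
      have : 2 * c = (-(m+1) : ℤ) * (2 * Real.pi * I) + Real.pi * I := by
        rw [hc]
        push_cast
        linear_combination (-I) * h0
      rw [this, Complex.exp_add, Complex.exp_int_mul_two_pi_mul_I, Complex.exp_pi_mul_I, one_mul]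
    have hexpM : NormedSpace.exp (c • Mc) = 1 - Mc := by
      rw [exp_smul_quad Mc hMsq c, hexp2c]
      norm_num [sub_eq_add_neg]
    rw [hsplit, Matrix.exp_add_of_commute _ _ hcomm2, ← Matrix.mulVec_mulVec, hexpM,
      Matrix.sub_mulVec, Matrix.one_mulVec, hMb, sub_neg_eq_add]
    congr 1
    ext i
    skip
    simp [hw, Pi.single_apply]
  simpa only [key] using hap
end
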